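/- Let H be a finite-dimensional complex inner product space, D a self-adjoint endomorphism of H, and γ a self-adjoint endomorphism with γ² = id and γD = −Dγ. Let P denote the orthogonal projection of H onto ker D and fix t > 0. Then s ↦ D·exp((t/2 − s)·D²) is Bochner integrable on [t,∞), and setting A₀ = γ·D·exp(−(t/2)·D²) and A₁ = ∫_t^∞ D·exp((t/2 − s)·D²) ds, one has the commutator identity A₀·A₁ − A₁·A₀ = 2·γ·(exp(−t·D²) − P). In particular, Tr(γ·exp(−t·D²)) = Tr(γ·P) for every t > 0. -/

import Mathlib

open MeasureTheory

/-- exp of an operator applied to an eigenvector. -/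
lemma exp_apply_eigenvector {H : Type*} [NormedAddCommGroup H] [NormedSpace ℂ H]
    [CompleteSpace H] (A : H →L[ℂ] H) {x : H} {a : ℂ} (h : A x = a • x) :
    NormedSpace.exp A x = Complex.exp a • x := by
  have hpow : ∀ n : ℕ, (A ^ n) x = a ^ n • x := by
    intro n
    induction n with
    | zero => simp
    | succ n ih =>
      rw [pow_succ, ContinuousLinearMap.mul_apply, h, (A ^ n).map_smul, ih, smul_smul, ← pow_succ']
  have hs : Summable fun n : ℕ => ((Nat.factorial n : ℂ))⁻¹ • A ^ n := NormedSpace.expSeries_summable' A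
  calc NormedSpace.exp A x
      = (∑' n : ℕ, ((Nat.factorial n : ℂ))⁻¹ • A ^ n) x := by rw [NormedSpace.exp_eq_tsum ℂ]
    _ = ∑' n : ℕ, (((Nat.factorial n : ℂ))⁻¹ • A ^ n) x :=
        (ContinuousLinearMap.apply ℂ H x).map_tsum hs
    _ = ∑' n : ℕ, (((Nat.factorial n : ℂ))⁻¹ • a ^ n) • x := by
        refine tsum_congr fun n => ?_
        rw [ContinuousLinearMap.smul_apply, hpow, smul_smul, smul_eq_mul]
    _ = (∑' n : ℕ, ((Nat.factorial n : ℂ))⁻¹ • a ^ n) • x :=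
        Summable.tsum_smul_const (NormedSpace.expSeries_summable' a) x
    _ = Complex.exp a • x := by
        rw [Complex.exp_eq_exp_ℂ, NormedSpace.exp_eq_tsum ℂ]

/-- improper integral of exp(-m s) on [t,∞). -/
lemma integral_exp_neg_Ici (t : ℝ) {m : ℝ} (hm : 0 < m) :
    ∫ s in Set.Ici t, Real.exp (-m * s) = Real.exp (-m * t) / m := by
  rw [MeasureTheory.integral_Ici_eq_integral_Ioi]
  have hd : ∀ x ∈ Set.Ici t,
      HasDerivAt (fun s => -Real.exp (-m * s) / m) (Real.exp (-m * x)) x := by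
    intro x _
    have h1 : HasDerivAt (fun s : ℝ => -m * s) (-m) x := by simpa using (hasDerivAt_id x).const_mul (-m)
    have h2 := h1.exp.neg.div_const m
    refine h2.congr_deriv ?_
    rw [mul_neg, neg_neg, mul_div_assoc, div_self hm.ne', mul_one]
  have htend : Filter.Tendsto (fun s => -Real.exp (-m * s) / m) Filter.atTop (nhds 0) := by
    have h0 : Filter.Tendsto (fun s : ℝ => Real.exp (-m * s)) Filter.atTop (nhds 0) :=
      Real.tendsto_exp_atBot.comp
        (Filter.tendsto_id.const_mul_atTop_of_neg (by linarith))
    simpa using h0.neg.div_const m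
  rw [MeasureTheory.integral_Ioi_of_hasDerivAt_of_tendsto' hd
    (exp_neg_integrableOn_Ioi t hm) htend]
  field_simp
  ring

set_option maxHeartbeats 1600000 in
/-- McKean–Singer in finite dimensions: for a self-adjoint `D`, a grading `γ`
(`γ² = 1`, `γD = −Dγ`) and `P` the orthogonal projection onto `ker D`, for
`t > 0` the map `s ↦ D·e^{(t/2−s)D²}` is integrable on `[t,∞)`, and with
`A₀ = γ·D·e^{−(t/2)D²}`, `A₁ = ∫_t^∞ D·e^{(t/2−s)D²} ds` one has
`[A₀,A₁] = 2γ(e^{−tD²} − P)`; in particular `Tr(γe^{−tD²}) = Tr(γP)`. -/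
theorem stmt13 {H : Type*} [NormedAddCommGroup H] [InnerProductSpace ℂ H]
    [FiniteDimensional ℂ H]
    (D γ P : H →L[ℂ] H)
    (hD : IsSelfAdjoint D) (hγsa : IsSelfAdjoint γ) (hγ2 : γ * γ = 1)
    (hanti : γ * D = - (D * γ))
    (hP : ∀ x : H, P x = ((LinearMap.ker (D : H →ₗ[ℂ] H)).orthogonalProjectionOnto x : H))
    (t : ℝ) (ht : 0 < t) :
    IntegrableOn
      (fun s : ℝ => D * NormedSpace.exp (((t / 2 - s : ℝ) : ℂ) • (D * D)))
      (Set.Ici t) volume ∧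
    (γ * (D * NormedSpace.exp (((-(t / 2) : ℝ) : ℂ) • (D * D)))) *
        (∫ s in Set.Ici t, D * NormedSpace.exp (((t / 2 - s : ℝ) : ℂ) • (D * D))) -
      (∫ s in Set.Ici t, D * NormedSpace.exp (((t / 2 - s : ℝ) : ℂ) • (D * D))) *
        (γ * (D * NormedSpace.exp (((-(t / 2) : ℝ) : ℂ) • (D * D)))) =
      (2 : ℂ) • (γ * (NormedSpace.exp (((-t : ℝ) : ℂ) • (D * D)) - P)) ∧
    LinearMap.trace ℂ H
        ((γ * NormedSpace.exp (((-t : ℝ) : ℂ) • (D * D)) : H →L[ℂ] H) : H →ₗ[ℂ] H) =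
      LinearMap.trace ℂ H ((γ * P : H →L[ℂ] H) : H →ₗ[ℂ] H) := by
  classical
  have hsymm : (D : H →ₗ[ℂ] H).IsSymmetric :=
    ContinuousLinearMap.isSelfAdjoint_iff_isSymmetric.mp hD
  set n := Module.finrank ℂ H with hnn
  let b : OrthonormalBasis (Fin n) ℂ H := hsymm.eigenvectorBasis rfl
  let μ : Fin n → ℝ := hsymm.eigenvalues rfl
  have hb : ∀ i, D (b i) = (μ i : ℂ) • b i := fun i =>
    hsymm.apply_eigenvectorBasis rfl i
  -- eigenvalue action of c • D²
  have hDD : ∀ (c : ℂ) (i : Fin n), (c • (D * D)) (b i) = (c * (μ i : ℂ) ^ 2) • b i := by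
    intro c i
    rw [ContinuousLinearMap.smul_apply, ContinuousLinearMap.mul_apply, hb,
      (D : H →L[ℂ] H).map_smul, hb, smul_smul, smul_smul]
    congr 1
    ring
  have hexp : ∀ (c : ℂ) (i : Fin n),
      NormedSpace.exp (c • (D * D)) (b i) = Complex.exp (c * (μ i : ℂ) ^ 2) • b i :=
    fun c i => exp_apply_eigenvector _ (hDD c i)
  -- extensionality along the basis
  have hext : ∀ (F G : H →L[ℂ] H), (∀ i, F (b i) = G (b i)) → F = G := by
    intro F G h
    apply ContinuousLinearMap.coe_injective
    refine b.toBasis.ext fun i => ?_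
    simpa using h i
  -- rank one projections
  let Q : Fin n → (H →L[ℂ] H) := fun i =>
    (ContinuousLinearMap.toSpanSingleton ℂ (b i)).comp (innerSL ℂ (b i))
  have hQ : ∀ i j, Q i (b j) = if i = j then b j else 0 := by
    intro i j
    have hij := orthonormal_iff_ite.mp b.orthonormal i j
    rcases eq_or_ne i j with rfl | hne
    · simp only [Q, ContinuousLinearMap.comp_apply, innerSL_apply_apply,
        ContinuousLinearMap.toSpanSingleton_apply, hij, if_pos rfl]
      simp
    · simp only [Q, ContinuousLinearMap.comp_apply, innerSL_apply_apply,
        ContinuousLinearMap.toSpanSingleton_apply, hij, if_neg hne, if_neg hne]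
      simp
  -- the scalar functions
  set g : Fin n → ℝ → ℝ := fun i s => μ i * Real.exp ((t / 2 - s) * μ i ^ 2) with hg
  have hcast : ∀ (r : ℝ) (i : Fin n),
      Complex.exp ((r : ℂ) * (μ i : ℂ) ^ 2) = ((Real.exp (r * μ i ^ 2) : ℝ) : ℂ) := by
    intro r i
    rw [Complex.ofReal_exp]
    norm_cast
  -- diagonal representation of the integrand
  have hrep : (fun s : ℝ => D * NormedSpace.exp (((t / 2 - s : ℝ) : ℂ) • (D * D)))
      = fun s : ℝ => ∑ i, ((g i s : ℝ) : ℂ) • Q i := by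
    funext s
    refine hext _ _ fun j => ?_
    rw [ContinuousLinearMap.mul_apply, hexp, (D : H →L[ℂ] H).map_smul, hb, smul_smul,
      ContinuousLinearMap.sum_apply]
    have h1 : ∀ i : Fin n, (((g i s : ℝ) : ℂ) • Q i) (b j)
        = if i = j then ((g j s : ℝ) : ℂ) • b j else 0 := by
      intro i
      rw [ContinuousLinearMap.smul_apply, hQ]
      rcases eq_or_ne i j with rfl | h
      · rw [if_pos rfl, if_pos rfl]
      · rw [if_neg h, if_neg h, smul_zero]
    simp only [h1, Finset.sum_ite_eq', Finset.mem_univ, if_true]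
    have hsc : Complex.exp (((t / 2 - s : ℝ) : ℂ) * (μ j : ℂ) ^ 2) * (μ j : ℂ)
        = ((g j s : ℝ) : ℂ) := by
      rw [hcast, hg]
      push_cast
      ring
    rw [hsc]
  -- integrability of the scalar functions
  have hgi : ∀ i, IntegrableOn (g i) (Set.Ici t) volume := by
    intro i
    rcases eq_or_ne (μ i) 0 with h | h
    · have : g i = fun _ => 0 := by funext s; simp [hg, h]
      rw [this]; exact Iff.mpr integrableOn_const_iff (Or.inl (by simp))
    · have hm : 0 < μ i ^ 2 := by positivity
      have h1 : IntegrableOn (fun s : ℝ => Real.exp (-(μ i ^ 2) * s)) (Set.Ici t) volume :=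
        Iff.mpr integrableOn_Ici_iff_integrableOn_Ioi (exp_neg_integrableOn_Ioi t hm)
      have h2 := h1.const_mul (μ i * Real.exp ((t / 2) * μ i ^ 2))
      refine IntegrableOn.congr_fun h2 ?_ measurableSet_Ici
      intro s _
      simp only [hg]
      rw [show (t / 2 - s) * μ i ^ 2 = t / 2 * μ i ^ 2 + -(μ i ^ 2) * s by ring,
        Real.exp_add]
      ring
  set a : Fin n → ℝ := (fun i => if μ i = 0 then 0 else Real.exp (-(t / 2) * μ i ^ 2) / μ i) with ha
  -- value of the scalar integrals
  have hga : ∀ i, ∫ s in Set.Ici t, g i s = a i := by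
    intro i
    rcases eq_or_ne (μ i) 0 with h | h
    · simp [hg, ha, h]
    · have hm : 0 < μ i ^ 2 := by positivity
      have key : ∀ s : ℝ, g i s
          = μ i * Real.exp (t / 2 * μ i ^ 2) * Real.exp (-(μ i ^ 2) * s) := by
        intro s
        simp only [hg]
        rw [show (t / 2 - s) * μ i ^ 2 = t / 2 * μ i ^ 2 + -(μ i ^ 2) * s by ring,
          Real.exp_add]
        ring
      calc ∫ s in Set.Ici t, g i s
          = ∫ s in Set.Ici t, μ i * Real.exp (t / 2 * μ i ^ 2) * Real.exp (-(μ i ^ 2) * s) := by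
            exact integral_congr_ae (Filter.Eventually.of_forall fun s => key s)
        _ = μ i * Real.exp (t / 2 * μ i ^ 2) * ∫ s in Set.Ici t, Real.exp (-(μ i ^ 2) * s) :=
            integral_const_mul _ _
        _ = μ i * Real.exp (t / 2 * μ i ^ 2) * (Real.exp (-(μ i ^ 2) * t) / μ i ^ 2) := by
            rw [integral_exp_neg_Ici t hm]
        _ = a i := by
            rw [ha]
            simp only [if_neg h]
            rw [show μ i * Real.exp (t / 2 * μ i ^ 2) * (Real.exp (-(μ i ^ 2) * t) / μ i ^ 2)
                = (Real.exp (t / 2 * μ i ^ 2) * Real.exp (-(μ i ^ 2) * t)) * (μ i / μ i ^ 2)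
                by ring, ← Real.exp_add,
              show t / 2 * μ i ^ 2 + -(μ i ^ 2) * t = -(t / 2) * μ i ^ 2 by ring,
              show μ i / μ i ^ 2 = 1 / μ i by rw [pow_two]; field_simp]
            rw [mul_one_div]
  -- integrability of the operator-valued integrand
  have hgiC : ∀ i, IntegrableOn (fun s => ((g i s : ℝ) : ℂ)) (Set.Ici t) volume :=
    fun i => (hgi i).ofReal
  have hintE : IntegrableOn
      (fun s : ℝ => D * NormedSpace.exp (((t / 2 - s : ℝ) : ℂ) • (D * D)))
      (Set.Ici t) volume := by
    rw [hrep]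
    exact integrable_finset_sum _ fun i _ => (hgiC i).smul_const (Q i)
  -- the value of the operator integral
  have hA1 : (∫ s in Set.Ici t, D * NormedSpace.exp (((t / 2 - s : ℝ) : ℂ) • (D * D)))
      = ∑ i, ((a i : ℝ) : ℂ) • Q i := by
    rw [hrep, integral_finset_sum _ fun i _ => (hgiC i).smul_const (Q i)]
    refine Finset.sum_congr rfl fun i _ => ?_
    rw [integral_smul_const]
    congr 1
    rw [show (fun s : ℝ => ((g i s : ℝ) : ℂ)) = (fun s : ℝ => ((g i s : ℝ) : ℂ)) from rfl]
    calc (∫ s in Set.Ici t, ((g i s : ℝ) : ℂ))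
        = ((∫ s in Set.Ici t, g i s : ℝ) : ℂ) := integral_ofReal
      _ = ((a i : ℝ) : ℂ) := by rw [hga]
  have hA1b : ∀ j, (∫ s in Set.Ici t,
        D * NormedSpace.exp (((t / 2 - s : ℝ) : ℂ) • (D * D))) (b j)
      = ((a j : ℝ) : ℂ) • b j := by
    intro j
    rw [hA1, ContinuousLinearMap.sum_apply]
    have h1 : ∀ i : Fin n, (((a i : ℝ) : ℂ) • Q i) (b j)
        = if i = j then ((a j : ℝ) : ℂ) • b j else 0 := by
      intro i
      rw [ContinuousLinearMap.smul_apply, hQ]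
      rcases eq_or_ne i j with rfl | h
      · rw [if_pos rfl, if_pos rfl]
      · rw [if_neg h, if_neg h, smul_zero]
    simp only [h1, Finset.sum_ite_eq', Finset.mem_univ, if_true]
  -- P on the basis
  have hPb : ∀ j, P (b j) = if μ j = 0 then b j else 0 := by
    intro j
    rw [hP]
    rcases eq_or_ne (μ j) 0 with h | h
    · rw [if_pos h]
      have hmem : b j ∈ LinearMap.ker (D : H →ₗ[ℂ] H) := by
        rw [LinearMap.mem_ker]
        show D (b j) = 0
        rw [hb, h]
        simp
      exact Submodule.starProjection_eq_self_iff.mpr hmem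
    · rw [if_neg h]
      have hmem : b j ∈ (LinearMap.ker (D : H →ₗ[ℂ] H))ᗮ := by
        rw [Submodule.mem_orthogonal]
        intro x hx
        have hx0 : D x = 0 := hx
        have h1 : inner ℂ (D x) (b j) = (inner ℂ x (D (b j)) : ℂ) := hsymm x (b j)
        rw [hx0, hb, inner_smul_right, inner_zero_left] at h1
        have h2 : (inner ℂ x (b j) : ℂ) = 0 := by
          have hμ : (μ j : ℂ) ≠ 0 := by exact_mod_cast h
          field_simp at h1
          exact (mul_eq_zero.mp h1.symm).resolve_left hμ
        exact h2
      rw [Submodule.orthogonalProjectionOnto_apply_of_mem_orthogonal hmem]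
      simp
  -- abbreviations
  set De := D * NormedSpace.exp (((-(t / 2) : ℝ) : ℂ) • (D * D)) with hDe
  set A1 := ∫ s in Set.Ici t, D * NormedSpace.exp (((t / 2 - s : ℝ) : ℂ) • (D * D))
    with hA1def
  set expT := NormedSpace.exp (((-t : ℝ) : ℂ) • (D * D)) with hexpT
  -- anticommutation of γ with D and commutation with exp(c • D²)
  have hDγ : D * γ = -(γ * D) := by rw [hanti, neg_neg]
  have hDDγ : ∀ c : ℂ, Commute (c • (D * D)) γ := by
    intro c
    refine Commute.smul_left ?_ c
    show D * D * γ = γ * (D * D)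
    calc D * D * γ = D * (D * γ) := by rw [mul_assoc]
      _ = D * (-(γ * D)) := by rw [hDγ]
      _ = -(D * γ * D) := by rw [mul_neg, mul_assoc]
      _ = -(-(γ * D) * D) := by rw [hDγ]
      _ = γ * (D * D) := by rw [neg_mul, neg_neg, mul_assoc]
  have hexpγ : ∀ c : ℂ, NormedSpace.exp (c • (D * D)) * γ
      = γ * NormedSpace.exp (c • (D * D)) := fun c => ((hDDγ c).exp_left).eq
  have hEγ : ∀ s : ℝ,
      (D * NormedSpace.exp (((t / 2 - s : ℝ) : ℂ) • (D * D))) * γ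
      = -(γ * (D * NormedSpace.exp (((t / 2 - s : ℝ) : ℂ) • (D * D)))) := by
    intro s
    calc (D * NormedSpace.exp (((t / 2 - s : ℝ) : ℂ) • (D * D))) * γ
        = D * (NormedSpace.exp (((t / 2 - s : ℝ) : ℂ) • (D * D)) * γ) := by
          rw [mul_assoc]
      _ = (D * γ) * NormedSpace.exp (((t / 2 - s : ℝ) : ℂ) • (D * D)) := by
          rw [hexpγ, mul_assoc]
      _ = (-(γ * D)) * NormedSpace.exp (((t / 2 - s : ℝ) : ℂ) • (D * D)) := by rw [hDγ]
      _ = -(γ * (D * NormedSpace.exp (((t / 2 - s : ℝ) : ℂ) • (D * D)))) := by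
          rw [neg_mul, mul_assoc]
  -- A1 anticommutes with γ
  have hA1γ : A1 * γ = -(γ * A1) := by
    have h1 := (((ContinuousLinearMap.mul ℂ (H →L[ℂ] H)).flip γ).integral_comp_comm hintE).symm
    have h2 := ((ContinuousLinearMap.mul ℂ (H →L[ℂ] H)) γ).integral_comp_comm hintE
    simp only [ContinuousLinearMap.flip_apply, ContinuousLinearMap.mul_apply'] at h1 h2
    calc A1 * γ
        = ∫ s in Set.Ici t,
            (D * NormedSpace.exp (((t / 2 - s : ℝ) : ℂ) • (D * D))) * γ := h1
      _ = ∫ s in Set.Ici t,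
            -(γ * (D * NormedSpace.exp (((t / 2 - s : ℝ) : ℂ) • (D * D)))) :=
          integral_congr_ae (Filter.Eventually.of_forall fun s => hEγ s)
      _ = -(∫ s in Set.Ici t,
            γ * (D * NormedSpace.exp (((t / 2 - s : ℝ) : ℂ) • (D * D)))) := integral_neg _
      _ = -(γ * A1) := by rw [h2]
  -- action of De on the basis
  have hDeb : ∀ j, De (b j)
      = (Complex.exp (((-(t / 2) : ℝ) : ℂ) * (μ j : ℂ) ^ 2) * (μ j : ℂ)) • b j := by
    intro j
    rw [hDe, ContinuousLinearMap.mul_apply, hexp, (D : H →L[ℂ] H).map_smul, hb, smul_smul]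
  -- the scalar identity
  have hscal : ∀ j, ((a j : ℝ) : ℂ) * (Complex.exp (((-(t / 2) : ℝ) : ℂ) * (μ j : ℂ) ^ 2)
        * (μ j : ℂ))
      = Complex.exp (((-t : ℝ) : ℂ) * (μ j : ℂ) ^ 2) - (if μ j = 0 then 1 else 0) := by
    intro j
    rcases eq_or_ne (μ j) 0 with h | h
    · simp [ha, h]
    · rw [if_neg h, sub_zero, hcast, hcast, ha]
      simp only [if_neg h]
      have hμ : (μ j : ℂ) ≠ 0 := by exact_mod_cast h
      have hreal : Real.exp (-(t / 2) * μ j ^ 2) / μ j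
            * (Real.exp (-(t / 2) * μ j ^ 2) * μ j)
          = Real.exp (-t * μ j ^ 2) := by
        rw [show Real.exp (-(t / 2) * μ j ^ 2) / μ j
              * (Real.exp (-(t / 2) * μ j ^ 2) * μ j)
            = Real.exp (-(t / 2) * μ j ^ 2) * Real.exp (-(t / 2) * μ j ^ 2) * (μ j / μ j)
            by ring,
          div_self h, mul_one, ← Real.exp_add]
        congr 1
        ring
      exact_mod_cast hreal
  -- the two diagonal products
  have hC : De * A1 = expT - P := by
    refine hext _ _ fun j => ?_
    rw [ContinuousLinearMap.mul_apply, hA1b, De.map_smul, hDeb, smul_smul,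
      ContinuousLinearMap.sub_apply, hexpT, hexp, hPb, hscal j, sub_smul]
    congr 1
    rcases eq_or_ne (μ j) 0 with h | h
    · rw [if_pos h, if_pos h, one_smul]
    · rw [if_neg h, if_neg h, zero_smul]
  have hC' : A1 * De = expT - P := by
    refine hext _ _ fun j => ?_
    rw [ContinuousLinearMap.mul_apply, hDeb, A1.map_smul, hA1b, smul_smul, mul_comm,
      ContinuousLinearMap.sub_apply, hexpT, hexp, hPb, hscal j, sub_smul]
    congr 1
    rcases eq_or_ne (μ j) 0 with h | h
    · rw [if_pos h, if_pos h, one_smul]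
    · rw [if_neg h, if_neg h, zero_smul]
  -- the commutator identity
  have hmain : (γ * De) * A1 - A1 * (γ * De) = (2 : ℂ) • (γ * (expT - P)) := by
    calc (γ * De) * A1 - A1 * (γ * De)
        = γ * (De * A1) - (A1 * γ) * De := by rw [mul_assoc γ De A1, ← mul_assoc A1 γ De]
      _ = γ * (De * A1) - (-(γ * A1)) * De := by rw [hA1γ]
      _ = γ * (De * A1) + γ * (A1 * De) := by rw [neg_mul, sub_neg_eq_add, mul_assoc γ A1 De]
      _ = γ * (expT - P) + γ * (expT - P) := by rw [hC, hC']
      _ = (2 : ℂ) • (γ * (expT - P)) := by rw [← two_smul ℂ]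
  -- the trace identity
  have htrace : LinearMap.trace ℂ H ((γ * expT : H →L[ℂ] H) : H →ₗ[ℂ] H)
      = LinearMap.trace ℂ H ((γ * P : H →L[ℂ] H) : H →ₗ[ℂ] H) := by
    have h0 : LinearMap.trace ℂ H
          (((γ * De) * A1 - A1 * (γ * De) : H →L[ℂ] H) : H →ₗ[ℂ] H)
        = LinearMap.trace ℂ H
          (((2 : ℂ) • (γ * (expT - P)) : H →L[ℂ] H) : H →ₗ[ℂ] H) := by rw [hmain]
    have hL : LinearMap.trace ℂ H
        (((γ * De) * A1 - A1 * (γ * De) : H →L[ℂ] H) : H →ₗ[ℂ] H) = 0 := by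
      have e1 : (((γ * De) * A1 - A1 * (γ * De) : H →L[ℂ] H) : H →ₗ[ℂ] H)
          = ((γ * De : H →L[ℂ] H) : H →ₗ[ℂ] H) ∘ₗ (A1 : H →ₗ[ℂ] H)
            - (A1 : H →ₗ[ℂ] H) ∘ₗ ((γ * De : H →L[ℂ] H) : H →ₗ[ℂ] H) := by
        simp only [ContinuousLinearMap.coe_sub, ContinuousLinearMap.mul_def,
          ContinuousLinearMap.coe_comp]
        rfl
      rw [e1, map_sub, ← Module.End.mul_eq_comp, ← Module.End.mul_eq_comp,
        LinearMap.trace_mul_comm, sub_self]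
    have hsplit : (γ * (expT - P) : H →L[ℂ] H) = γ * expT - γ * P := mul_sub γ expT P
    have hR : LinearMap.trace ℂ H
          (((2 : ℂ) • (γ * (expT - P)) : H →L[ℂ] H) : H →ₗ[ℂ] H)
        = (2 : ℂ) * (LinearMap.trace ℂ H ((γ * expT : H →L[ℂ] H) : H →ₗ[ℂ] H)
            - LinearMap.trace ℂ H ((γ * P : H →L[ℂ] H) : H →ₗ[ℂ] H)) := by
      rw [hsplit]
      have e2 : (((2 : ℂ) • (γ * expT - γ * P) : H →L[ℂ] H) : H →ₗ[ℂ] H)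
          = (2 : ℂ) • (((γ * expT : H →L[ℂ] H) : H →ₗ[ℂ] H)
            - ((γ * P : H →L[ℂ] H) : H →ₗ[ℂ] H)) := by
        simp only [ContinuousLinearMap.coe_smul, ContinuousLinearMap.coe_sub]
      rw [e2, _root_.map_smul, map_sub, smul_eq_mul]
    rw [hL, hR] at h0
    have h2 : (2 : ℂ) ≠ 0 := two_ne_zero
    have := (mul_eq_zero.mp h0.symm).resolve_left h2
    exact sub_eq_zero.mp this
  exact ⟨hintE, hmain, htrace⟩
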